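/- Let G be a finite group and define the Chermak–Delgado measure m_G(H) = |H| · |C_G(H)| for subgroups H ≤ G. If H attains the maximum value of m_G over all subgroups of G, then Z(G) ≤ H. -/
import Mathlib

/-- The Chermak–Delgado measure of a subgroup. -/
noncomputable def cdMeasure {G : Type*} [Group G] (H : Subgroup G) : ℕ :=
  Nat.card H * Nat.card (Subgroup.centralizer (H : Set G))

theorem center_le_of_cd_max
    (G : Type*) [Group G] [Finite G] (H : Subgroup G)
    (hmax : ∀ K : Subgroup G, cdMeasure K ≤ cdMeasure H) :
    Subgroup.center G ≤ H := by
  set K := H ⊔ Subgroup.center G with hK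
  have hcent : Subgroup.centralizer (K : Set G) = Subgroup.centralizer (H : Set G) := by
    apply le_antisymm
    · exact Subgroup.centralizer_le (by exact_mod_cast le_sup_left : H ≤ K)
    · rw [← Subgroup.le_centralizer_iff]
      exact sup_le (Subgroup.le_centralizer_iff.mpr le_rfl)
        (Subgroup.center_le_centralizer _)
  have hHK : H ≤ K := le_sup_left
  have hcard : Nat.card K ≤ Nat.card H := by
    have := hmax K
    unfold cdMeasure at this
    rw [hcent] at this
    have hpos : 0 < Nat.card (Subgroup.centralizer (H : Set G)) := Nat.card_pos
    exact Nat.le_of_mul_le_mul_right this hpos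
  have : H = K := Subgroup.eq_of_le_of_card_ge hHK hcard
  rw [this]
  exact le_sup_right
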